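/- Let A be an evolution algebra with natural basis B and associated graph E, and let H be a hereditary subset of E^0. If I_H is a maximal ideal of A, then H is a maximal element of the poset of proper hereditary subsets of E^0. -/

import Mathlib

variable {K ι A : Type*}

section Defs
variable [Field K] [NonUnitalNonAssocCommRing A] [Module K A]
  [SMulCommClass K A A] [IsScalarTower K A A]

/-- A natural basis: distinct basis elements multiply to zero. -/
def IsNaturalBasis (b : Module.Basis ι K A) : Prop := ∀ i j : ι, i ≠ j → b i * b j = 0

/-- Edge i → j in the associated graph: the j-th coordinate of (b i)² is nonzero. -/
def EvolEdge (b : Module.Basis ι K A) (i j : ι) : Prop := b.repr (b i * b i) j ≠ 0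

/-- Hereditary subset of vertices: closed under edges (hence under reachability). -/
def EvolHereditary (b : Module.Basis ι K A) (H : Set ι) : Prop :=
  ∀ i ∈ H, ∀ j, EvolEdge b i j → j ∈ H

/-- Saturated subset: a regular vertex all of whose edge-targets lie in H belongs to H. -/
def EvolSaturated (b : Module.Basis ι K A) (H : Set ι) : Prop :=
  ∀ i : ι, b i * b i ≠ 0 → (∀ j, EvolEdge b i j → j ∈ H) → i ∈ H

/-- Ideal of a (nonunital, nonassociative, commutative) algebra: a submodule absorbing
multiplication. -/
def IsEvolIdeal (I : Submodule K A) : Prop := ∀ a : A, ∀ x ∈ I, a * x ∈ I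

/-- I_H, the span of the basis elements indexed by H. -/
def idealOf (b : Module.Basis ι K A) (H : Set ι) : Submodule K A := Submodule.span K (b '' H)

/-- H_I = {e ∈ B : e² ∈ I}. -/
def hSet (b : Module.Basis ι K A) (I : Submodule K A) : Set ι := {i | b i * b i ∈ I}

/-- Maximal ideal. -/
def IsMaxIdeal (I : Submodule K A) : Prop :=
  IsEvolIdeal I ∧ I ≠ ⊤ ∧
    ∀ J : Submodule K A, IsEvolIdeal J → I ≤ J → J = I ∨ J = ⊤

/-- Absorption property of an ideal. -/
def Absorption (I : Submodule K A) : Prop := ∀ x : A, (∀ a : A, x * a ∈ I) → x ∈ I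

end Defs

/-- A², the span of all products. -/
def sqIdeal (K A : Type*) [Field K] [NonUnitalNonAssocCommRing A] [Module K A] :
    Submodule K A :=
  Submodule.span K {x : A | ∃ a c : A, x = a * c}

variable [Field K] [NonUnitalNonAssocCommRing A] [Module K A]
  [SMulCommClass K A A] [IsScalarTower K A A]


lemma basis_mem_idealOf_iff (b : Module.Basis ι K A) (H : Set ι) (j : ι) :
    b j ∈ idealOf b H ↔ j ∈ H := by
  rw [idealOf, Module.Basis.mem_span_image, Module.Basis.repr_self,
    Finsupp.support_single_ne_zero _ one_ne_zero]
  simp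

lemma mul_basis_eq (b : Module.Basis ι K A) (hb : IsNaturalBasis b) (a : A) (j : ι) :
    a * b j = (b.repr a j) • (b j * b j) := by
  conv_lhs => rw [← b.linearCombination_repr a]
  rw [Finsupp.linearCombination_apply, Finsupp.sum, Finset.sum_mul]
  refine (Finset.sum_eq_single j (fun i _ hij => ?_) (fun hj => ?_)).trans
    (smul_mul_assoc _ _ _)
  · rw [smul_mul_assoc, hb i j hij, smul_zero]
  · rw [Finsupp.notMem_support_iff] at hj
    rw [hj, zero_smul, zero_mul]

lemma sq_mem_idealOf (b : Module.Basis ι K A) (H : Set ι) (hH : EvolHereditary b H)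
    {j : ι} (hj : j ∈ H) : b j * b j ∈ idealOf b H := by
  rw [← b.linearCombination_repr (b j * b j), Finsupp.linearCombination_apply, Finsupp.sum]
  refine Submodule.sum_mem _ fun k hk => Submodule.smul_mem _ _ ?_
  rw [Finsupp.mem_support_iff] at hk
  exact Submodule.subset_span ⟨k, hH j hj k hk, rfl⟩

lemma isEvolIdeal_idealOf (b : Module.Basis ι K A) (hb : IsNaturalBasis b) (H : Set ι)
    (hH : EvolHereditary b H) : IsEvolIdeal (idealOf b H) := by
  intro a x hx
  have : idealOf b H ≤ Submodule.comap (LinearMap.mulLeft K a) (idealOf b H) := by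
    rw [idealOf, Submodule.span_le]
    rintro _ ⟨j, hj, rfl⟩
    simp only [Set.mem_preimage, SetLike.mem_coe, Submodule.mem_comap, LinearMap.mulLeft_apply]
    rw [mul_basis_eq b hb a j]
    exact Submodule.smul_mem _ _ (sq_mem_idealOf b H hH hj)
  exact this hx

theorem stmt10 (b : Module.Basis ι K A) (hb : IsNaturalBasis b) (H : Set ι)
    (hH : EvolHereditary b H) (hmax : IsMaxIdeal (idealOf b H)) :
    H ≠ Set.univ ∧
      ∀ H' : Set ι, EvolHereditary b H' → H ⊆ H' → H' = H ∨ H' = Set.univ := by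
  have hne : H ≠ Set.univ := by
    intro h
    apply hmax.2.1
    rw [idealOf, h, Set.image_univ, Module.Basis.span_eq]
  refine ⟨hne, fun H' hH' hsub => ?_⟩
  have hle : idealOf b H ≤ idealOf b H' :=
    Submodule.span_mono (Set.image_mono hsub)
  rcases hmax.2.2 _ (isEvolIdeal_idealOf b hb H' hH') hle with h | h
  · left
    ext j
    constructor
    · intro hj
      rw [← basis_mem_idealOf_iff b H' j, h, basis_mem_idealOf_iff] at hj
      exact hj
    · exact fun hj => hsub hj
  · right
    ext j
    simp only [Set.mem_univ, iff_true]
    rw [← basis_mem_idealOf_iff b H' j, h]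
    trivial
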